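/- Let F_1 and F_2 be regular graphs that are A-cospectral, and let H_1 and H_2 be regular graphs that are A-cospectral. Then the T-edge neighbourhood coronas F_1 ⊟_T H_1 and F_2 ⊟_T H_2 are A-cospectral. -/

import Mathlib

open Finset Matrix Polynomial

/-- The vertex-edge incidence matrix `R(G)` of a graph `G`: rows indexed by vertices,
columns indexed by edges, with entry `1` exactly when the vertex is incident with the edge. -/
def incMat {V : Type*} [DecidableEq V] (G : SimpleGraph V) : Matrix V G.edgeSet ℝ :=
  Matrix.of fun v e => if v ∈ (e : Sym2 V) then (1 : ℝ) else 0

/-- The `M`-coronal `Γ_M(x)`: the sum of all entries of `(xI - M)⁻¹`. -/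
noncomputable def coronal {n : Type*} [Fintype n] [DecidableEq n]
    (M : Matrix n n ℝ) (x : ℝ) : ℝ :=
  ∑ i, ∑ j, (x • (1 : Matrix n n ℝ) - M)⁻¹ i j

/-- The T-vertex neighbourhood corona `G₁ ⊡_T G₂`: the disjoint union of the T-graph
`T(G₁)` (on `V₁ ⊕ E(G₁)`) and one copy of `G₂` for each vertex of `G₁`, where every
vertex of the `i`-th copy of `G₂` is joined to every neighbour of `vᵢ` in `T(G₁)`,
i.e. to every vertex of `G₁` adjacent to `vᵢ` and to every edge of `G₁` incident with `vᵢ`. -/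
def tVertexCorona {V₁ V₂ : Type*} (G₁ : SimpleGraph V₁) (G₂ : SimpleGraph V₂) :
    SimpleGraph (V₁ ⊕ (G₁.edgeSet ⊕ V₁ × V₂)) :=
  SimpleGraph.fromRel fun a b =>
    match a, b with
    | Sum.inl u, Sum.inl v => G₁.Adj u v
    | Sum.inl u, Sum.inr (Sum.inl e) => u ∈ (e : Sym2 V₁)
    | Sum.inl u, Sum.inr (Sum.inr iw) => G₁.Adj u iw.1
    | Sum.inr (Sum.inl e), Sum.inr (Sum.inl f) => ∃ v, v ∈ (e : Sym2 V₁) ∧ v ∈ (f : Sym2 V₁)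
    | Sum.inr (Sum.inl e), Sum.inr (Sum.inr iw) => iw.1 ∈ (e : Sym2 V₁)
    | Sum.inr (Sum.inr iw), Sum.inr (Sum.inr jw) => iw.1 = jw.1 ∧ G₂.Adj iw.2 jw.2
    | _, _ => False

/-- The T-edge neighbourhood corona `G₁ ⊟_T G₂`: the disjoint union of the T-graph
`T(G₁)` (on `V₁ ⊕ E(G₁)`) and one copy of `G₂` for each edge of `G₁`, where every
vertex of the `i`-th copy of `G₂` is joined to the two endpoints of the edge `eᵢ`
(as vertices of `G₁` inside `T(G₁)`). -/
def tEdgeCorona {V₁ V₂ : Type*} (G₁ : SimpleGraph V₁) (G₂ : SimpleGraph V₂) :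
    SimpleGraph (V₁ ⊕ (G₁.edgeSet ⊕ G₁.edgeSet × V₂)) :=
  SimpleGraph.fromRel fun a b =>
    match a, b with
    | Sum.inl u, Sum.inl v => G₁.Adj u v
    | Sum.inl u, Sum.inr (Sum.inl e) => u ∈ (e : Sym2 V₁)
    | Sum.inl u, Sum.inr (Sum.inr ew) => u ∈ (ew.1 : Sym2 V₁)
    | Sum.inr (Sum.inl e), Sum.inr (Sum.inl f) => ∃ v, v ∈ (e : Sym2 V₁) ∧ v ∈ (f : Sym2 V₁)
    | Sum.inr (Sum.inr ew), Sum.inr (Sum.inr fw) => ew.1 = fw.1 ∧ G₂.Adj ew.2 fw.2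
    | _, _ => False

noncomputable instance {V₁ V₂ : Type*} (G₁ : SimpleGraph V₁) (G₂ : SimpleGraph V₂) :
    DecidableRel (tVertexCorona G₁ G₂).Adj := Classical.decRel _

noncomputable instance {V₁ V₂ : Type*} (G₁ : SimpleGraph V₁) (G₂ : SimpleGraph V₂) :
    DecidableRel (tEdgeCorona G₁ G₂).Adj := Classical.decRel _

noncomputable instance {V : Type*} (G : SimpleGraph V) :
    DecidableRel (G.lineGraph).Adj := Classical.decRel _

namespace TEC
variable {U W : Type*} (F : SimpleGraph U) (H : SimpleGraph W)

lemma adj_VV (u v : U) : (tEdgeCorona F H).Adj (.inl u) (.inl v) ↔ F.Adj u v := by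
  rw [tEdgeCorona, SimpleGraph.fromRel_adj]
  constructor
  · rintro ⟨-, h | h⟩
    · exact h
    · exact h.symm
  · intro h
    exact ⟨by simpa using F.ne_of_adj h, Or.inl h⟩

lemma adj_VE (u : U) (e : F.edgeSet) :
    (tEdgeCorona F H).Adj (.inl u) (.inr (.inl e)) ↔ u ∈ (e : Sym2 U) := by
  rw [tEdgeCorona, SimpleGraph.fromRel_adj]
  constructor
  · rintro ⟨-, h | h⟩
    · exact h
    · exact h.elim
  · intro h
    exact ⟨by simp, Or.inl h⟩

lemma adj_VW (u : U) (ew : F.edgeSet × W) :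
    (tEdgeCorona F H).Adj (.inl u) (.inr (.inr ew)) ↔ u ∈ (ew.1 : Sym2 U) := by
  rw [tEdgeCorona, SimpleGraph.fromRel_adj]
  constructor
  · rintro ⟨-, h | h⟩
    · exact h
    · exact h.elim
  · intro h
    exact ⟨by simp, Or.inl h⟩

lemma adj_EE (e f : F.edgeSet) :
    (tEdgeCorona F H).Adj (.inr (.inl e)) (.inr (.inl f)) ↔
      e ≠ f ∧ ∃ v, v ∈ (e : Sym2 U) ∧ v ∈ (f : Sym2 U) := by
  rw [tEdgeCorona, SimpleGraph.fromRel_adj]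
  constructor
  · rintro ⟨hne, h | h⟩
    · exact ⟨fun hh => hne (by rw [hh]), h⟩
    · exact ⟨fun hh => hne (by rw [hh]), h.imp fun v hv => ⟨hv.2, hv.1⟩⟩
  · rintro ⟨hne, h⟩
    exact ⟨by simpa using hne, Or.inl h⟩

lemma adj_EW (e : F.edgeSet) (fw : F.edgeSet × W) :
    ¬ (tEdgeCorona F H).Adj (.inr (.inl e)) (.inr (.inr fw)) := by
  rw [tEdgeCorona, SimpleGraph.fromRel_adj]
  rintro ⟨-, h | h⟩ <;> exact h

lemma adj_WW (ew fw : F.edgeSet × W) :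
    (tEdgeCorona F H).Adj (.inr (.inr ew)) (.inr (.inr fw)) ↔
      ew.1 = fw.1 ∧ H.Adj ew.2 fw.2 := by
  rw [tEdgeCorona, SimpleGraph.fromRel_adj]
  constructor
  · rintro ⟨hne, h | h⟩
    · exact h
    · exact ⟨h.1.symm, h.2.symm⟩
  · rintro ⟨h1, h2⟩
    refine ⟨?_, Or.inl ⟨h1, h2⟩⟩
    simp only [ne_eq, Sum.inr.injEq]
    intro hh
    exact H.ne_of_adj h2 (congrArg Prod.snd hh)

end TEC
namespace TEC
section CountX
section Count
variable {V : Type*} [Fintype V] [DecidableEq V] (G : SimpleGraph V) [DecidableRel G.Adj]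

lemma sym2_unique_common {e f : Sym2 V} (hef : e ≠ f) {x y : V}
    (hxe : x ∈ e) (hxf : x ∈ f) (hye : y ∈ e) (hyf : y ∈ f) : x = y := by
  by_contra h
  exact hef (Sym2.eq_of_ne_mem h hxe hye hxf hyf)

lemma sum_mem_edge (e : G.edgeSet) :
    ∑ v, (if v ∈ (e : Sym2 V) then (1 : ℝ) else 0) = 2 := by
  obtain ⟨e, he⟩ := e
  induction e with
  | _ a b =>
    have hab : a ≠ b := G.ne_of_adj (G.mem_edgeSet.mp he)
    have : ∀ v : V, v ∈ (⟨s(a, b), he⟩ : G.edgeSet).1 ↔ v = a ∨ v = b := fun v => Sym2.mem_iff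
    rw [Finset.sum_congr rfl fun v _ => by rw [if_congr (this v) rfl rfl]]
    rw [Finset.sum_boole]
    have : Finset.filter (fun v => v = a ∨ v = b) Finset.univ = {a, b} := by
      ext v; simp
    rw [this, Finset.card_insert_of_notMem (by simpa using hab), Finset.card_singleton]
    norm_num

lemma sum_common_edge {e f : G.edgeSet} (hef : e ≠ f) :
    ∑ v, (if v ∈ (e : Sym2 V) ∧ v ∈ (f : Sym2 V) then (1 : ℝ) else 0)
      = if (∃ v, v ∈ (e : Sym2 V) ∧ v ∈ (f : Sym2 V)) then 1 else 0 := by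
  classical
  have hef' : (e : Sym2 V) ≠ (f : Sym2 V) := fun h => hef (Subtype.ext h)
  rw [Finset.sum_boole]
  by_cases h : ∃ v, v ∈ (e : Sym2 V) ∧ v ∈ (f : Sym2 V)
  · obtain ⟨v₀, hv₀⟩ := h
    have : Finset.filter (fun v => v ∈ (e : Sym2 V) ∧ v ∈ (f : Sym2 V)) Finset.univ = {v₀} := by
      ext w
      simp only [Finset.mem_filter, Finset.mem_univ, true_and, Finset.mem_singleton]
      constructor
      · rintro ⟨hw1, hw2⟩; exact sym2_unique_common hef' hw1 hw2 hv₀.1 hv₀.2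
      · rintro rfl; exact hv₀
    rw [this, if_pos ⟨v₀, hv₀⟩, Finset.card_singleton]; norm_num
  · have : Finset.filter (fun v => v ∈ (e : Sym2 V) ∧ v ∈ (f : Sym2 V)) Finset.univ = ∅ := by
      ext w; simp only [Finset.mem_filter, Finset.mem_univ, true_and, Finset.notMem_empty,
        iff_false]
      exact fun hw => h ⟨w, hw⟩
    rw [this, if_neg h]; norm_num

lemma sum_edges_through (u : V) :
    ∑ e : G.edgeSet, (if u ∈ (e : Sym2 V) then (1 : ℝ) else 0) = G.degree u := by
  rw [Finset.sum_boole]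
  congr 1
  rw [← Fintype.card_subtype]
  rw [← SimpleGraph.card_incidenceSet_eq_degree G (v := u)]
  apply Fintype.card_congr
  exact (Equiv.subtypeSubtypeEquivSubtypeInter (· ∈ G.edgeSet) (u ∈ ·))

lemma sum_edges_through_pair {u v : V} (huv : u ≠ v) :
    ∑ e : G.edgeSet, (if u ∈ (e : Sym2 V) ∧ v ∈ (e : Sym2 V) then (1 : ℝ) else 0)
      = if G.Adj u v then 1 else 0 := by
  rw [Finset.sum_boole]
  have key : ∀ e : G.edgeSet, (u ∈ (e : Sym2 V) ∧ v ∈ (e : Sym2 V)) → (e : Sym2 V) = s(u, v) :=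
    fun e ⟨h1, h2⟩ => Sym2.eq_of_ne_mem huv h1 h2 (Sym2.mem_mk_left u v) (Sym2.mem_mk_right u v)
  by_cases h : G.Adj u v
  · have : Finset.filter (fun e : G.edgeSet => u ∈ (e : Sym2 V) ∧ v ∈ (e : Sym2 V)) Finset.univ
        = {⟨s(u, v), G.mem_edgeSet.mpr h⟩} := by
      ext e
      simp only [Finset.mem_filter, Finset.mem_univ, true_and, Finset.mem_singleton]
      constructor
      · intro he; exact Subtype.ext (key e he)
      · rintro rfl; exact ⟨Sym2.mem_mk_left u v, Sym2.mem_mk_right u v⟩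
    rw [this, if_pos h, Finset.card_singleton]; norm_num
  · have : Finset.filter (fun e : G.edgeSet => u ∈ (e : Sym2 V) ∧ v ∈ (e : Sym2 V)) Finset.univ
        = ∅ := by
      ext e
      simp only [Finset.mem_filter, Finset.mem_univ, true_and, Finset.notMem_empty, iff_false]
      intro he
      exact h (G.mem_edgeSet.mp (key e he ▸ e.2))
    rw [this, if_neg h]; norm_num

end Count
end CountX

section Blocks
variable {U W : Type*} [Fintype U] [DecidableEq U] [Fintype W] [DecidableEq W]
  (F : SimpleGraph U) (H : SimpleGraph W) [DecidableRel F.Adj] [DecidableRel H.Adj]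

/-- The edge-edge (line graph) block of `T(F)`. -/
def lineB : Matrix F.edgeSet F.edgeSet ℝ :=
  Matrix.of fun e f =>
    if e ≠ f ∧ ∃ v, v ∈ (e : Sym2 U) ∧ v ∈ (f : Sym2 U) then (1 : ℝ) else 0

/-- The coupling block between `V ⊕ E` and the copies of `H`. -/
def couplC : Matrix (U ⊕ F.edgeSet) (F.edgeSet × W) ℝ :=
  Matrix.of fun p ew => Sum.elim (fun u => incMat F u ew.1) (fun _ => 0) p

/-- The block-diagonal matrix of copies of the adjacency matrix of `H`. -/
def diagH : Matrix (F.edgeSet × W) (F.edgeSet × W) ℝ :=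
  Matrix.of fun p q => if p.1 = q.1 then H.adjMatrix ℝ p.2 q.2 else 0

lemma blockM :
    ((tEdgeCorona F H).adjMatrix ℝ).submatrix (Equiv.sumAssoc U F.edgeSet (F.edgeSet × W))
        (Equiv.sumAssoc U F.edgeSet (F.edgeSet × W))
      = Matrix.fromBlocks
          (Matrix.fromBlocks (F.adjMatrix ℝ) (incMat F) (incMat F)ᵀ (lineB F))
          (couplC F) (couplC F)ᵀ (diagH F H) := by
  have hVE := adj_VE F H
  have hVW := adj_VW F H
  have hEV : ∀ (e : F.edgeSet) (u : U),
      (tEdgeCorona F H).Adj (.inr (.inl e)) (.inl u) ↔ u ∈ (e : Sym2 U) := fun e u => by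
    rw [SimpleGraph.adj_comm]; exact adj_VE F H u e
  have hWV : ∀ (ew : F.edgeSet × W) (u : U),
      (tEdgeCorona F H).Adj (.inr (.inr ew)) (.inl u) ↔ u ∈ (ew.1 : Sym2 U) := fun ew u => by
    rw [SimpleGraph.adj_comm]; exact adj_VW F H u ew
  have hWE : ∀ (ew : F.edgeSet × W) (e : F.edgeSet),
      ¬ (tEdgeCorona F H).Adj (.inr (.inr ew)) (.inr (.inl e)) := fun ew e h =>
    adj_EW F H e ew h.symm
  ext p q
  rcases p with (u | e) | ⟨e, w⟩ <;> rcases q with (v | f) | ⟨f, w'⟩ <;>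
    simp only [Matrix.submatrix_apply, Equiv.sumAssoc_apply_inl_inl, Equiv.sumAssoc_apply_inl_inr,
      Equiv.sumAssoc_apply_inr, SimpleGraph.adjMatrix_apply, Matrix.fromBlocks_apply₁₁,
      Matrix.fromBlocks_apply₁₂, Matrix.fromBlocks_apply₂₁, Matrix.fromBlocks_apply₂₂,
      Matrix.transpose_apply]
  · rw [if_congr (adj_VV F H u v) rfl rfl]; try rfl
  · rw [if_congr (hVE u f) rfl rfl]; try rfl
  · rw [if_congr (hVW u (f, w')) rfl rfl]; try rfl
  · rw [if_congr (hEV e v) rfl rfl]; try rfl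
  · rw [if_congr (adj_EE F H e f) rfl rfl]; try rfl
  · rw [if_neg (adj_EW F H e (f, w'))]; rfl
  · rw [if_congr (hWV (e, w) v) rfl rfl]; try rfl
  · rw [if_neg (hWE (e, w) f)]; rfl
  · rw [if_congr (adj_WW F H (e, w) (f, w')) rfl rfl]
    simp [diagH, ite_and]

lemma RRt (c : ℕ) (hreg : F.IsRegularOfDegree c) :
    incMat F * (incMat F)ᵀ = F.adjMatrix ℝ + (c : ℝ) • 1 := by
  ext u v
  simp only [Matrix.mul_apply, Matrix.transpose_apply, incMat, Matrix.of_apply, Matrix.add_apply,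
    Matrix.smul_apply, Matrix.one_apply, smul_eq_mul]
  rcases eq_or_ne u v with rfl | huv
  · have h1 : ∀ e : F.edgeSet,
        (if u ∈ (e : Sym2 U) then (1:ℝ) else 0) * (if u ∈ (e : Sym2 U) then (1:ℝ) else 0)
          = if u ∈ (e : Sym2 U) then (1:ℝ) else 0 := by
      intro e; by_cases h : u ∈ (e : Sym2 U) <;> simp [h]
    rw [Finset.sum_congr rfl fun e _ => h1 e, sum_edges_through F u, hreg u]
    simp
  · have h1 : ∀ e : F.edgeSet,
        (if u ∈ (e : Sym2 U) then (1:ℝ) else 0) * (if v ∈ (e : Sym2 U) then (1:ℝ) else 0)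
          = if u ∈ (e : Sym2 U) ∧ v ∈ (e : Sym2 U) then (1:ℝ) else 0 := by
      intro e
      by_cases h : u ∈ (e : Sym2 U) <;> by_cases h' : v ∈ (e : Sym2 U) <;> simp [h, h']
    rw [Finset.sum_congr rfl fun e _ => h1 e, sum_edges_through_pair F huv]
    simp [huv]

lemma RtR : (incMat F)ᵀ * incMat F = lineB F + (2 : ℝ) • 1 := by
  ext e f
  simp only [Matrix.mul_apply, Matrix.transpose_apply, incMat, Matrix.of_apply, Matrix.add_apply,
    Matrix.smul_apply, Matrix.one_apply, lineB, smul_eq_mul]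
  rcases eq_or_ne e f with rfl | hef
  · have h1 : ∀ v : U,
        (if v ∈ (e : Sym2 U) then (1:ℝ) else 0) * (if v ∈ (e : Sym2 U) then (1:ℝ) else 0)
          = if v ∈ (e : Sym2 U) then (1:ℝ) else 0 := by
      intro v; by_cases h : v ∈ (e : Sym2 U) <;> simp [h]
    rw [Finset.sum_congr rfl fun v _ => h1 v, sum_mem_edge F e]
    simp
  · have h1 : ∀ v : U,
        (if v ∈ (e : Sym2 U) then (1:ℝ) else 0) * (if v ∈ (f : Sym2 U) then (1:ℝ) else 0)
          = if v ∈ (e : Sym2 U) ∧ v ∈ (f : Sym2 U) then (1:ℝ) else 0 := by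
      intro v
      by_cases h : v ∈ (e : Sym2 U) <;> by_cases h' : v ∈ (f : Sym2 U) <;> simp [h, h']
    rw [Finset.sum_congr rfl fun v _ => h1 v, sum_common_edge F hef]
    simp [hef]

variable (x : ℝ)

lemma sub_diagH_entry (p q : F.edgeSet × W) :
    (x • (1 : Matrix (F.edgeSet × W) (F.edgeSet × W) ℝ) - diagH F H) p q
      = if p.1 = q.1 then (x • (1 : Matrix W W ℝ) - H.adjMatrix ℝ) p.2 q.2 else 0 := by
  rcases p with ⟨e, w⟩; rcases q with ⟨f, w'⟩
  by_cases h : e = f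
  · subst h
    simp [diagH, Matrix.one_apply, Prod.ext_iff]
  · simp [diagH, Matrix.one_apply, Prod.ext_iff, h]

lemma det_diagH :
    (x • (1 : Matrix (F.edgeSet × W) (F.edgeSet × W) ℝ) - diagH F H).det
      = ((x • (1 : Matrix W W ℝ) - H.adjMatrix ℝ).det) ^ (Fintype.card F.edgeSet) := by
  have h : x • (1 : Matrix (F.edgeSet × W) (F.edgeSet × W) ℝ) - diagH F H
      = (Matrix.blockDiagonal fun _ : F.edgeSet => x • (1 : Matrix W W ℝ) - H.adjMatrix ℝ
        ).submatrix (Equiv.prodComm F.edgeSet W) (Equiv.prodComm F.edgeSet W) := by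
    ext p q
    rw [sub_diagH_entry]
    rcases p with ⟨e, w⟩; rcases q with ⟨f, w'⟩
    by_cases h : e = f <;> simp [Matrix.blockDiagonal_apply, h, Ne.symm]
  rw [h, Matrix.det_submatrix_equiv_self, Matrix.det_blockDiagonal, Finset.prod_const,
    Finset.card_univ]

/-- Explicit inverse of `x•1 - diagH`. -/
noncomputable def diagHinv : Matrix (F.edgeSet × W) (F.edgeSet × W) ℝ :=
  Matrix.of fun p q =>
    if p.1 = q.1 then (x • (1 : Matrix W W ℝ) - H.adjMatrix ℝ)⁻¹ p.2 q.2 else 0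

lemma diagH_mul_inv (hH : (x • (1 : Matrix W W ℝ) - H.adjMatrix ℝ).det ≠ 0) :
    (x • (1 : Matrix (F.edgeSet × W) (F.edgeSet × W) ℝ) - diagH F H) * diagHinv F H x = 1 := by
  set B := x • (1 : Matrix W W ℝ) - H.adjMatrix ℝ with hB
  have hBB : B * B⁻¹ = 1 := Matrix.mul_nonsing_inv _ (isUnit_iff_ne_zero.mpr hH)
  ext p q
  rw [Matrix.mul_apply]
  rw [Finset.sum_congr rfl fun r _ => by rw [sub_diagH_entry F H x p r]]
  rw [Fintype.sum_prod_type]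
  have step : ∀ f : F.edgeSet, ∑ w2 : W,
      (if p.1 = f then B p.2 w2 else 0) * (diagHinv F H x) (f, w2) q
        = if p.1 = f then (if f = q.1 then ∑ w2, B p.2 w2 * B⁻¹ w2 q.2 else 0) else 0 := by
    intro f
    by_cases h1 : p.1 = f
    · by_cases h2 : f = q.1 <;> simp [diagHinv, h1, h2, Finset.mul_sum, hB]
    · simp [h1]
  rw [Finset.sum_congr rfl fun f _ => step f]
  rw [Finset.sum_ite_eq Finset.univ p.1
    (fun f => if f = q.1 then ∑ w2, B p.2 w2 * B⁻¹ w2 q.2 else 0)]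
  simp only [Finset.mem_univ, if_true]
  have : ∑ w2, B p.2 w2 * B⁻¹ w2 q.2 = (1 : Matrix W W ℝ) p.2 q.2 := by
    rw [← Matrix.mul_apply, hBB]
  rcases eq_or_ne p q with rfl | hpq
  · simp [this]
  · by_cases h : p.1 = q.1
    · have h2 : p.2 ≠ q.2 := fun hc => hpq (Prod.ext h hc)
      simp [h, this, Matrix.one_apply, h2, hpq]
    · simp [h, Matrix.one_apply, hpq]

end Blocks
end TEC
namespace TEC
section Schur
variable {U W : Type*} [Fintype U] [DecidableEq U] [Fintype W] [DecidableEq W]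
  (F : SimpleGraph U) (H : SimpleGraph W) [DecidableRel F.Adj] [DecidableRel H.Adj]
  (x : ℝ)

lemma fromBlocks_sub' {l m n o : Type*} (A A' : Matrix n l ℝ) (B B' : Matrix n m ℝ)
    (C C' : Matrix o l ℝ) (D D' : Matrix o m ℝ) :
    Matrix.fromBlocks A B C D - Matrix.fromBlocks A' B' C' D'
      = Matrix.fromBlocks (A - A') (B - B') (C - C') (D - D') := by
  ext p q
  rcases p with p | p <;> rcases q with q | q <;> rfl

lemma inv_rowsum (d : ℕ) (hregH : H.IsRegularOfDegree d) (hd : x - (d : ℝ) ≠ 0)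
    (hH : (x • (1 : Matrix W W ℝ) - H.adjMatrix ℝ).det ≠ 0) (i : W) :
    ∑ j, (x • (1 : Matrix W W ℝ) - H.adjMatrix ℝ)⁻¹ i j = (x - (d : ℝ))⁻¹ := by
  set B := x • (1 : Matrix W W ℝ) - H.adjMatrix ℝ with hB
  have h1 : B *ᵥ (fun _ => (1 : ℝ)) = fun _ => x - (d : ℝ) := by
    funext k
    have hA := SimpleGraph.adjMatrix_mulVec_const_apply_of_regular
      (α := ℝ) (a := (1 : ℝ)) hregH (v := k)
    simp only [hB, Matrix.sub_mulVec, Matrix.smul_mulVec, Matrix.one_mulVec,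
      Pi.sub_apply, Pi.smul_apply, smul_eq_mul]
    rw [show (fun _ : W => (1 : ℝ)) = Function.const W (1 : ℝ) from rfl, hA]
    ring
  have h2 : B⁻¹ *ᵥ (fun _ => x - (d : ℝ)) = fun _ => (1 : ℝ) := by
    rw [← h1, Matrix.mulVec_mulVec, Matrix.nonsing_inv_mul _ (isUnit_iff_ne_zero.mpr hH),
      Matrix.one_mulVec]
  have h3 : (∑ j, B⁻¹ i j) * (x - (d : ℝ)) = 1 := by
    have h := congrFun h2 i
    simp only [Matrix.mulVec, dotProduct] at h
    rw [← h, Finset.sum_mul]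
  exact eq_inv_of_mul_eq_one_left h3

lemma schur1 (d : ℕ) (hregH : H.IsRegularOfDegree d) (hd : x - (d : ℝ) ≠ 0)
    (hH : (x • (1 : Matrix W W ℝ) - H.adjMatrix ℝ).det ≠ 0) :
    couplC (W := W) F * diagHinv F H x * (couplC (W := W) F)ᵀ
      = Matrix.fromBlocks
          (((Fintype.card W : ℝ) * (x - (d : ℝ))⁻¹) • (incMat F * (incMat F)ᵀ)) 0 0 0 := by
  set B := x • (1 : Matrix W W ℝ) - H.adjMatrix ℝ with hB
  have hS : ∑ w2 : W, ∑ w3 : W, B⁻¹ w3 w2 = (Fintype.card W : ℝ) * (x - (d : ℝ))⁻¹ := by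
    rw [Finset.sum_comm,
      Finset.sum_congr rfl fun w3 _ => inv_rowsum H x d hregH hd hH w3]
    simp [Finset.sum_const, Finset.card_univ, nsmul_eq_mul]
  ext p q
  rcases p with u | e <;> rcases q with v | f
  · have inner : ∀ r : F.edgeSet × W,
        (∑ s : F.edgeSet × W, couplC F (Sum.inl u) s * diagHinv F H x s r)
          = incMat F u r.1 * ∑ w3, B⁻¹ w3 r.2 := by
      intro r
      rw [Fintype.sum_prod_type]
      have hgg : ∀ g : F.edgeSet, ∑ w3, couplC F (Sum.inl u) (g, w3) * diagHinv F H x (g, w3) r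
          = if g = r.1 then ∑ w3, incMat F u g * B⁻¹ w3 r.2 else 0 := by
        intro g; by_cases hg : g = r.1 <;> simp [couplC, diagHinv, hg, hB]
      rw [Finset.sum_congr rfl fun g _ => hgg g, Finset.sum_ite_eq' Finset.univ r.1 _]
      simp [Finset.mul_sum]
    calc _ = ∑ r : F.edgeSet × W,
            (∑ s : F.edgeSet × W, couplC F (Sum.inl u) s * diagHinv F H x s r)
              * couplC F (Sum.inl v) r := by
          rw [Matrix.mul_apply]
          exact Finset.sum_congr rfl fun r _ => by rw [Matrix.mul_apply, Matrix.transpose_apply]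
      _ = ∑ r : F.edgeSet × W,
            (incMat F u r.1 * ∑ w3, B⁻¹ w3 r.2) * incMat F v r.1 := by
          exact Finset.sum_congr rfl fun r _ => by rw [inner r]; rfl
      _ = (∑ g : F.edgeSet, incMat F u g * incMat F v g) * (∑ w2, ∑ w3, B⁻¹ w3 w2) := by
          rw [Fintype.sum_prod_type, Finset.sum_mul_sum]
          exact Finset.sum_congr rfl fun g _ => Finset.sum_congr rfl fun w2 _ => by ring
      _ = Matrix.fromBlocks
            (((Fintype.card W : ℝ) * (x - (d : ℝ))⁻¹) • (incMat F * (incMat F)ᵀ)) 0 0 0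
            (Sum.inl u) (Sum.inl v) := by
          rw [hS]
          simp [Matrix.mul_apply, Matrix.transpose_apply]
          ring
  · simp [Matrix.mul_apply, couplC, Matrix.transpose_apply]
  · simp [Matrix.mul_apply, couplC, Matrix.transpose_apply]
  · simp [Matrix.mul_apply, couplC, Matrix.transpose_apply]

end Schur
end TEC
namespace TEC
section Key
variable {U W : Type*} [Fintype U] [DecidableEq U] [Fintype W] [DecidableEq W]
  (F : SimpleGraph U) (H : SimpleGraph W) [DecidableRel F.Adj] [DecidableRel H.Adj]

noncomputable def qpoly (c d w : ℕ) (x : ℝ) : ℝ[X] :=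
  (C (x - (d : ℝ)) * (C x - X) - C (w : ℝ) * (X + C (c : ℝ))) * (C (x + 2 - (c : ℝ)) - X)
    - C (x - (d : ℝ)) * (X + C (c : ℝ))

lemma aeval_C_mul' {κ : Type*} [Fintype κ] [DecidableEq κ] (A : Matrix κ κ ℝ) (r : ℝ)
    (p : ℝ[X]) : Polynomial.aeval A (C r * p) = r • Polynomial.aeval A p := by
  rw [_root_.map_mul, Polynomial.aeval_C, Algebra.algebraMap_eq_smul_one, smul_one_mul]

lemma key (c d : ℕ) (hregF : F.IsRegularOfDegree c) (hregH : H.IsRegularOfDegree d) (x : ℝ)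
    (h2 : x + 2 ≠ 0) (hd : x - (d : ℝ) ≠ 0)
    (hH : (x • (1 : Matrix W W ℝ) - H.adjMatrix ℝ).det ≠ 0)
    (hZ : ((x + 2) • (1 : Matrix F.edgeSet F.edgeSet ℝ) - (incMat F)ᵀ * incMat F).det ≠ 0) :
    (x • (1 : Matrix (U ⊕ (F.edgeSet ⊕ F.edgeSet × W)) (U ⊕ (F.edgeSet ⊕ F.edgeSet × W)) ℝ)
          - (tEdgeCorona F H).adjMatrix ℝ).det
        * (x + 2) ^ Fintype.card U * (x - (d : ℝ)) ^ Fintype.card U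
      = (x • (1 : Matrix W W ℝ) - H.adjMatrix ℝ).det ^ Fintype.card F.edgeSet
        * (x + 2) ^ Fintype.card F.edgeSet
        * (Polynomial.aeval (F.adjMatrix ℝ) (qpoly c d (Fintype.card W) x)).det := by
  classical
  set A := F.adjMatrix ℝ with hA
  set R := incMat F with hR
  set γ : ℝ := (Fintype.card W : ℝ) * (x - (d : ℝ))⁻¹ with hγ
  set Zm : Matrix F.edgeSet F.edgeSet ℝ := (x + 2) • 1 - Rᵀ * R with hZm
  set K : Matrix U U ℝ := (x + 2) • 1 - R * Rᵀ with hK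
  set P : Matrix U U ℝ := x • 1 - A - γ • (R * Rᵀ) with hP
  have hZunit : IsUnit Zm.det := isUnit_iff_ne_zero.mpr hZ
  haveI : Invertible (x • (1 : Matrix (F.edgeSet × W) (F.edgeSet × W) ℝ) - diagH F H) :=
    invertibleOfRightInverse _ _ (diagH_mul_inv F H x hH)
  haveI : Invertible Zm := Matrix.invertibleOfIsUnitDet _ hZunit
  -- Step 1: block decomposition
  have e1 : (x • (1 : Matrix (U ⊕ (F.edgeSet ⊕ F.edgeSet × W))
        (U ⊕ (F.edgeSet ⊕ F.edgeSet × W)) ℝ) - (tEdgeCorona F H).adjMatrix ℝ).det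
      = (Matrix.fromBlocks
          (Matrix.fromBlocks (x • 1 - A) (-R) (-Rᵀ) (x • 1 - lineB F))
          (-(couplC F)) (-(couplC F)ᵀ)
          (x • (1 : Matrix (F.edgeSet × W) (F.edgeSet × W) ℝ) - diagH F H)).det := by
    rw [← Matrix.det_submatrix_equiv_self (Equiv.sumAssoc U F.edgeSet (F.edgeSet × W))]
    congr 1
    have hsub : (x • (1 : Matrix (U ⊕ (F.edgeSet ⊕ F.edgeSet × W))
          (U ⊕ (F.edgeSet ⊕ F.edgeSet × W)) ℝ) - (tEdgeCorona F H).adjMatrix ℝ).submatrix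
            (Equiv.sumAssoc U F.edgeSet (F.edgeSet × W)) (Equiv.sumAssoc U F.edgeSet (F.edgeSet × W))
        = x • 1 - ((tEdgeCorona F H).adjMatrix ℝ).submatrix
            (Equiv.sumAssoc U F.edgeSet (F.edgeSet × W))
            (Equiv.sumAssoc U F.edgeSet (F.edgeSet × W)) := by
      ext p q
      simp [Matrix.submatrix_apply, Matrix.one_apply, Matrix.sub_apply,
        Equiv.apply_eq_iff_eq]
    rw [hsub, blockM F H,
      ← Matrix.fromBlocks_one (l := U ⊕ F.edgeSet) (m := F.edgeSet × W) (α := ℝ),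
      ← Matrix.fromBlocks_one (l := U) (m := F.edgeSet) (α := ℝ),
      Matrix.fromBlocks_smul, Matrix.fromBlocks_smul, fromBlocks_sub', fromBlocks_sub']
    simp [hA, hR]
  have hZb : x • (1 : Matrix F.edgeSet F.edgeSet ℝ) - lineB F = Zm := by
    have hLB : lineB F = Rᵀ * R - (2 : ℝ) • 1 := by rw [hR, RtR F]; abel
    rw [hLB, hZm, show (x + 2) • (1 : Matrix F.edgeSet F.edgeSet ℝ) = x • 1 + (2 : ℝ) • 1
      from by rw [← add_smul]]
    abel
  -- Step 2: first Schur complement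
  have e2 : (Matrix.fromBlocks
        (Matrix.fromBlocks (x • 1 - A) (-R) (-Rᵀ) (x • 1 - lineB F))
        (-(couplC F)) (-(couplC F)ᵀ)
        (x • (1 : Matrix (F.edgeSet × W) (F.edgeSet × W) ℝ) - diagH F H)).det
      = (x • (1 : Matrix W W ℝ) - H.adjMatrix ℝ).det ^ Fintype.card F.edgeSet
        * (Matrix.fromBlocks P (-R) (-Rᵀ) Zm).det := by
    rw [Matrix.det_fromBlocks₂₂, invOf_eq_right_inv (diagH_mul_inv F H x hH),
      det_diagH F H x]
    congr 1
    simp only [Matrix.neg_mul, Matrix.mul_neg, neg_neg]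
    rw [schur1 F H x d hregH hd hH, fromBlocks_sub', sub_zero, sub_zero, sub_zero, hZb, ← hP]
  -- Step 3: second Schur complement
  have e3 : (Matrix.fromBlocks P (-R) (-Rᵀ) Zm).det
      = Zm.det * (P - R * Zm⁻¹ * Rᵀ).det := by
    rw [Matrix.det_fromBlocks₂₂, Matrix.invOf_eq_nonsing_inv]
    simp only [Matrix.neg_mul, Matrix.mul_neg, neg_neg]
  -- Step 4: commutation identity
  have e4 : (P - R * Zm⁻¹ * Rᵀ).det * K.det = (P * K - R * Rᵀ).det := by
    have hcomm : Zm * Rᵀ = Rᵀ * K := by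
      rw [hZm, hK, Matrix.sub_mul, Matrix.mul_sub, Matrix.smul_mul, Matrix.one_mul,
        Matrix.mul_smul, Matrix.mul_one, Matrix.mul_assoc]
    have h5 : Zm⁻¹ * (Zm * Rᵀ) = Rᵀ := by
      rw [← Matrix.mul_assoc, Matrix.nonsing_inv_mul _ hZunit, Matrix.one_mul]
    have hZK : R * Zm⁻¹ * Rᵀ * K = R * Rᵀ := by
      calc R * Zm⁻¹ * Rᵀ * K = R * (Zm⁻¹ * (Rᵀ * K)) := by
            rw [Matrix.mul_assoc, Matrix.mul_assoc]
        _ = R * (Zm⁻¹ * (Zm * Rᵀ)) := by rw [← hcomm]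
        _ = R * Rᵀ := by rw [h5]
    rw [← Matrix.det_mul, Matrix.sub_mul, hZK]
  -- Step 5: Weinstein–Aronszajn exchange
  have e5 : (x + 2) ^ Fintype.card U * Zm.det
      = (x + 2) ^ Fintype.card F.edgeSet * K.det := by
    have hZ2 : Zm = (x + 2) • ((1 : Matrix F.edgeSet F.edgeSet ℝ)
        + ((-(x + 2)⁻¹) • Rᵀ) * R) := by
      rw [hZm, Matrix.smul_mul, smul_add, smul_smul,
        show (x + 2) * -(x + 2)⁻¹ = -1 by field_simp, neg_one_smul]
      abel
    have hK2 : K = (x + 2) • ((1 : Matrix U U ℝ) + R * ((-(x + 2)⁻¹) • Rᵀ)) := by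
      rw [hK, Matrix.mul_smul, smul_add, smul_smul,
        show (x + 2) * -(x + 2)⁻¹ = -1 by field_simp, neg_one_smul]
      abel
    rw [hZ2, hK2, Matrix.det_smul, Matrix.det_smul, Matrix.det_one_add_mul_comm]
    ring
  -- Step 6: polynomial identification
  have e6 : (x - (d : ℝ)) ^ Fintype.card U * (P * K - R * Rᵀ).det
      = (Polynomial.aeval A (qpoly c d (Fintype.card W) x)).det := by
    have hRRt : R * Rᵀ = A + (c : ℝ) • 1 := by rw [hR, hA]; exact RRt F c hregF
    have hPa : P = Polynomial.aeval A (C x - X - C γ * (X + C (c : ℝ))) := by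
      rw [hP, hRRt]
      simp only [_root_.map_sub, _root_.map_add, _root_.map_mul, Polynomial.aeval_C,
        Polynomial.aeval_X, Algebra.algebraMap_eq_smul_one, smul_one_mul]
    have hKa : K = Polynomial.aeval A (C (x + 2) - (X + C (c : ℝ))) := by
      rw [hK, hRRt]
      simp only [_root_.map_sub, _root_.map_add, Polynomial.aeval_C,
        Polynomial.aeval_X, Algebra.algebraMap_eq_smul_one]
      rw [← add_smul]
    have hRa : R * Rᵀ = Polynomial.aeval A (X + C (c : ℝ)) := by
      rw [hRRt]
      simp only [_root_.map_add, Polynomial.aeval_C, Polynomial.aeval_X,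
        Algebra.algebraMap_eq_smul_one]
    have hbig : (x - (d : ℝ)) • (P * K - R * Rᵀ)
        = Polynomial.aeval A (C (x - (d : ℝ)) *
            ((C x - X - C γ * (X + C (c : ℝ))) * (C (x + 2) - (X + C (c : ℝ)))
              - (X + C (c : ℝ)))) := by
      rw [hPa, hKa, hRa, ← _root_.map_mul, ← _root_.map_sub, aeval_C_mul']
    have hγw : ((Fintype.card W : ℕ) : ℝ) = (x - (d : ℝ)) * γ := by
      rw [hγ]; field_simp
    have hqp : C (x - (d : ℝ)) *
          ((C x - X - C γ * (X + C (c : ℝ))) * (C (x + 2) - (X + C (c : ℝ)))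
            - (X + C (c : ℝ)))
        = qpoly c d (Fintype.card W) x := by
      rw [qpoly, hγw]
      simp only [_root_.map_mul, _root_.map_sub, _root_.map_add]
      ring
    rw [← hqp, ← hbig, Matrix.det_smul]
  -- Assemble
  rw [e1, e2, e3]
  set φ := (x • (1 : Matrix W W ℝ) - H.adjMatrix ℝ).det
  set dZ := Zm.det
  set dK := K.det
  set dS := (P - R * Zm⁻¹ * Rᵀ).det
  set dPK := (P * K - R * Rᵀ).det
  set dQ := (Polynomial.aeval A (qpoly c d (Fintype.card W) x)).det
  set n := Fintype.card U
  set m := Fintype.card F.edgeSet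
  linear_combination (φ ^ m * dS * (x - (d : ℝ)) ^ n) * e5
    + (φ ^ m * (x + 2) ^ m * (x - (d : ℝ)) ^ n) * e4
    + (φ ^ m * (x + 2) ^ m) * e6

end Key
end TEC
namespace TEC


variable {n : Type*} [Fintype n] [DecidableEq n]

/-- Conjugation by an invertible pair as an `AlgHom`. -/
def conjAlgHom (U V : Matrix n n ℝ) (hUV : U * V = 1) (hVU : V * U = 1) :
    Matrix n n ℝ →ₐ[ℝ] Matrix n n ℝ where
  toFun X := U * X * V
  map_one' := by show U * 1 * V = 1; rw [Matrix.mul_one, hUV]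
  map_mul' X Y := by
    show U * (X * Y) * V = (U * X * V) * (U * Y * V)
    simp only [Matrix.mul_assoc]
    rw [← Matrix.mul_assoc V U, hVU, Matrix.one_mul]
  map_zero' := by show U * 0 * V = 0; simp
  map_add' X Y := by
    show U * (X + Y) * V = U * X * V + U * Y * V
    rw [Matrix.mul_add, Matrix.add_mul]
  commutes' r := by
    show U * algebraMap ℝ (Matrix n n ℝ) r * V = _
    simp [Algebra.algebraMap_eq_smul_one, Matrix.smul_mul, Matrix.mul_smul, hUV]

lemma aeval_diagonal (d : n → ℝ) (p : ℝ[X]) :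
    aeval (Matrix.diagonal d) p = Matrix.diagonal fun i => p.eval (d i) := by
  induction p using Polynomial.induction_on' with
  | add p q hp hq => simp [hp, hq, Matrix.diagonal_add]
  | monomial k a =>
    simp only [aeval_monomial, Algebra.algebraMap_eq_smul_one, Matrix.diagonal_pow, eval_monomial]
    rw [Matrix.smul_mul, Matrix.one_mul]
    ext i j
    rcases eq_or_ne i j with rfl | h
    · simp [Matrix.diagonal_apply_eq, mul_comm]
    · simp [Matrix.diagonal_apply_ne _ h]

lemma eval_charpoly' (M : Matrix n n ℝ) (x : ℝ) :
    M.charpoly.eval x = (x • (1 : Matrix n n ℝ) - M).det := by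
  rw [Matrix.charpoly, ← Polynomial.coe_evalRingHom, RingHom.map_det]
  congr 1
  ext i j
  rcases eq_or_ne i j with rfl | h
  · simp [Matrix.charmatrix_apply_eq, Matrix.one_apply_eq]
  · simp [Matrix.charmatrix_apply_ne _ _ _ h, Matrix.one_apply_ne h]

section Herm
variable {A : Matrix n n ℝ}

lemma aeval_herm (hA : A.IsHermitian) (p : ℝ[X]) :
    aeval A p = (hA.eigenvectorUnitary : Matrix n n ℝ) *
      (Matrix.diagonal fun i => p.eval (hA.eigenvalues i)) *
      star (hA.eigenvectorUnitary : Matrix n n ℝ) := by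
  set U := (hA.eigenvectorUnitary : Matrix n n ℝ) with hU
  have hUV : U * star U = 1 := Unitary.coe_mul_star_self hA.eigenvectorUnitary
  have hVU : star U * U = 1 := Unitary.coe_star_mul_self hA.eigenvectorUnitary
  have hAeq : A = conjAlgHom U (star U) hUV hVU (Matrix.diagonal hA.eigenvalues) := by
    have h := hA.spectral_theorem
    have h2 : Matrix.diagonal (RCLike.ofReal ∘ hA.eigenvalues) = Matrix.diagonal hA.eigenvalues := by
      congr 1
    rw [h2] at h
    exact h
  have h3 : aeval (conjAlgHom U (star U) hUV hVU (Matrix.diagonal hA.eigenvalues)) p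
      = (conjAlgHom U (star U) hUV hVU) (aeval (Matrix.diagonal hA.eigenvalues) p) :=
    Polynomial.aeval_algHom_apply _ _ _
  rw [aeval_diagonal] at h3
  rw [← hAeq] at h3
  exact h3

lemma det_aeval_herm (hA : A.IsHermitian) (p : ℝ[X]) :
    (aeval A p).det = ∏ i, p.eval (hA.eigenvalues i) := by
  have hVU : star (hA.eigenvectorUnitary : Matrix n n ℝ) * (hA.eigenvectorUnitary : Matrix n n ℝ)
      = 1 := Unitary.coe_star_mul_self hA.eigenvectorUnitary
  rw [aeval_herm hA p, Matrix.det_mul, Matrix.det_mul, mul_comm, ← mul_assoc, ← Matrix.det_mul,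
    hVU, Matrix.det_one, one_mul, Matrix.det_diagonal]

lemma trace_aeval_herm (hA : A.IsHermitian) (p : ℝ[X]) :
    (aeval A p).trace = ∑ i, p.eval (hA.eigenvalues i) := by
  have hVU : star (hA.eigenvectorUnitary : Matrix n n ℝ) * (hA.eigenvectorUnitary : Matrix n n ℝ)
      = 1 := Unitary.coe_star_mul_self hA.eigenvectorUnitary
  rw [aeval_herm hA p, Matrix.trace_mul_cycle, hVU, Matrix.one_mul, Matrix.trace_diagonal]

lemma charpoly_herm (hA : A.IsHermitian) :
    A.charpoly = ∏ i, (X - C (hA.eigenvalues i)) := by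
  apply Polynomial.funext; intro y
  rw [eval_charpoly']
  have h : y • (1 : Matrix n n ℝ) - A = aeval A (C y - X) := by
    simp [Algebra.algebraMap_eq_smul_one]
  rw [h, det_aeval_herm hA]
  simp [eval_prod]

lemma roots_charpoly_herm (hA : A.IsHermitian) :
    A.charpoly.roots = Finset.univ.val.map hA.eigenvalues := by
  rw [charpoly_herm hA,
    ← Polynomial.roots_multiset_prod_X_sub_C (Finset.univ.val.map hA.eigenvalues)]
  congr 1
  rw [Multiset.map_map]
  rfl

lemma det_aeval_roots (hA : A.IsHermitian) (p : ℝ[X]) :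
    (aeval A p).det = (A.charpoly.roots.map fun t => p.eval t).prod := by
  rw [det_aeval_herm hA, roots_charpoly_herm hA, Multiset.map_map]
  rfl

lemma trace_aeval_roots (hA : A.IsHermitian) (p : ℝ[X]) :
    (aeval A p).trace = (A.charpoly.roots.map fun t => p.eval t).sum := by
  rw [trace_aeval_herm hA, roots_charpoly_herm hA, Multiset.map_map]
  rfl

end Herm

lemma det_aeval_congr {n₁ n₂ : Type*} [Fintype n₁] [DecidableEq n₁] [Fintype n₂] [DecidableEq n₂]
    {A₁ : Matrix n₁ n₁ ℝ} {A₂ : Matrix n₂ n₂ ℝ} (h₁ : A₁.IsHermitian) (h₂ : A₂.IsHermitian)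
    (h : A₁.charpoly = A₂.charpoly) (p : ℝ[X]) :
    (aeval A₁ p).det = (aeval A₂ p).det := by
  rw [det_aeval_roots h₁, det_aeval_roots h₂, h]

lemma trace_aeval_congr {n₁ n₂ : Type*} [Fintype n₁] [DecidableEq n₁] [Fintype n₂] [DecidableEq n₂]
    {A₁ : Matrix n₁ n₁ ℝ} {A₂ : Matrix n₂ n₂ ℝ} (h₁ : A₁.IsHermitian) (h₂ : A₂.IsHermitian)
    (h : A₁.charpoly = A₂.charpoly) (p : ℝ[X]) :
    (aeval A₁ p).trace = (aeval A₂ p).trace := by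
  rw [trace_aeval_roots h₁, trace_aeval_roots h₂, h]


end TEC
namespace TEC

lemma adjHerm {V : Type*} [Fintype V] (G : SimpleGraph V) [DecidableRel G.Adj] :
    (G.adjMatrix ℝ).IsHermitian := by
  rw [Matrix.IsHermitian, Matrix.conjTranspose_eq_transpose_of_trivial]
  exact SimpleGraph.isSymm_adjMatrix G

lemma card_eq_of_cospectral {V₁ V₂ : Type*} [Fintype V₁] [DecidableEq V₁] [Fintype V₂]
    [DecidableEq V₂] {G₁ : SimpleGraph V₁} {G₂ : SimpleGraph V₂}
    [DecidableRel G₁.Adj] [DecidableRel G₂.Adj]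
    (hcos : (G₁.adjMatrix ℝ).charpoly = (G₂.adjMatrix ℝ).charpoly) :
    Fintype.card V₁ = Fintype.card V₂ := by
  rw [← Matrix.charpoly_natDegree_eq_dim (G₁.adjMatrix ℝ),
    ← Matrix.charpoly_natDegree_eq_dim (G₂.adjMatrix ℝ), hcos]

lemma trace_sq (V : Type*) [Fintype V] [DecidableEq V] (G : SimpleGraph V)
    [DecidableRel G.Adj] (c : ℕ) (hreg : G.IsRegularOfDegree c) :
    (Polynomial.aeval (G.adjMatrix ℝ) (X * X : ℝ[X])).trace
      = (Fintype.card V : ℝ) * (c : ℝ) := by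
  have h1 : Polynomial.aeval (G.adjMatrix ℝ) (X * X : ℝ[X])
      = G.adjMatrix ℝ * G.adjMatrix ℝ := by
    rw [_root_.map_mul, Polynomial.aeval_X]
  rw [h1, show (G.adjMatrix ℝ * G.adjMatrix ℝ).trace
    = ∑ i, (G.adjMatrix ℝ * G.adjMatrix ℝ) i i from rfl]
  rw [Finset.sum_congr rfl fun i _ => SimpleGraph.adjMatrix_mul_self_apply_self G i]
  rw [Finset.sum_congr rfl fun i _ => by rw [hreg i]]
  simp [Finset.sum_const, Finset.card_univ, mul_comm]

lemma reg_transfer {V₁ V₂ : Type*} [Fintype V₁] [DecidableEq V₁] [Fintype V₂] [DecidableEq V₂]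
    {G₁ : SimpleGraph V₁} {G₂ : SimpleGraph V₂} [DecidableRel G₁.Adj] [DecidableRel G₂.Adj]
    {c₁ c₂ : ℕ} (h₁ : G₁.IsRegularOfDegree c₁) (h₂ : G₂.IsRegularOfDegree c₂)
    (hcos : (G₁.adjMatrix ℝ).charpoly = (G₂.adjMatrix ℝ).charpoly) :
    G₂.IsRegularOfDegree c₁ := by
  have hcard := card_eq_of_cospectral hcos
  rcases Nat.eq_zero_or_pos (Fintype.card V₂) with h0 | hpos
  · intro v
    have : 0 < Fintype.card V₂ := Fintype.card_pos_iff.mpr ⟨v⟩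
    omega
  · have ht := trace_aeval_congr (adjHerm G₁) (adjHerm G₂) hcos (X * X : ℝ[X])
    rw [trace_sq V₁ G₁ c₁ h₁, trace_sq V₂ G₂ c₂ h₂, hcard] at ht
    have hc : (c₁ : ℝ) = (c₂ : ℝ) := by
      have hn : ((Fintype.card V₂ : ℕ) : ℝ) ≠ 0 := by positivity
      exact mul_left_cancel₀ hn ht
    have : c₁ = c₂ := Nat.cast_injective hc
    rw [this]
    exact h₂

lemma edge_card_eq {V₁ V₂ : Type*} [Fintype V₁] [DecidableEq V₁] [Fintype V₂] [DecidableEq V₂]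
    {G₁ : SimpleGraph V₁} {G₂ : SimpleGraph V₂} [DecidableRel G₁.Adj] [DecidableRel G₂.Adj]
    {c : ℕ} (h₁ : G₁.IsRegularOfDegree c) (h₂ : G₂.IsRegularOfDegree c)
    (hcard : Fintype.card V₁ = Fintype.card V₂) :
    Fintype.card G₁.edgeSet = Fintype.card G₂.edgeSet := by
  have e₁ : ∑ v, G₁.degree v = 2 * #G₁.edgeFinset := G₁.sum_degrees_eq_twice_card_edges
  have e₂ : ∑ v, G₂.degree v = 2 * #G₂.edgeFinset := G₂.sum_degrees_eq_twice_card_edges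
  rw [Finset.sum_congr rfl fun v _ => h₁ v, Finset.sum_const, Finset.card_univ,
    smul_eq_mul, SimpleGraph.edgeFinset_card, hcard] at e₁
  rw [Finset.sum_congr rfl fun v _ => h₂ v, Finset.sum_const, Finset.card_univ,
    smul_eq_mul, SimpleGraph.edgeFinset_card] at e₂
  omega

end TEC

/-- If `F₁` and `F₂` are A-cospectral regular graphs and `H₁` and `H₂` are A-cospectral
regular graphs, then `F₁ ⊟_T H₁` and `F₂ ⊟_T H₂` are A-cospectral. -/
theorem tEdgeCorona_A_cospectral_pair {U₁ U₂ W₁ W₂ : Type*}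
    [Fintype U₁] [DecidableEq U₁] [Fintype U₂] [DecidableEq U₂]
    [Fintype W₁] [DecidableEq W₁] [Fintype W₂] [DecidableEq W₂]
    (F₁ : SimpleGraph U₁) (F₂ : SimpleGraph U₂) (H₁ : SimpleGraph W₁) (H₂ : SimpleGraph W₂)
    [DecidableRel F₁.Adj] [DecidableRel F₂.Adj] [DecidableRel H₁.Adj] [DecidableRel H₂.Adj]
    (c₁ c₂ d₁ d₂ : ℕ) (hregF₁ : F₁.IsRegularOfDegree c₁) (hregF₂ : F₂.IsRegularOfDegree c₂)
    (hregH₁ : H₁.IsRegularOfDegree d₁) (hregH₂ : H₂.IsRegularOfDegree d₂)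
    (hcosF : (F₁.adjMatrix ℝ).charpoly = (F₂.adjMatrix ℝ).charpoly)
    (hcosH : (H₁.adjMatrix ℝ).charpoly = (H₂.adjMatrix ℝ).charpoly) :
    ((tEdgeCorona F₁ H₁).adjMatrix ℝ).charpoly =
      ((tEdgeCorona F₂ H₂).adjMatrix ℝ).charpoly := by
  classical
  have hhF₁ := TEC.adjHerm F₁
  have hhF₂ := TEC.adjHerm F₂
  have hcardU := TEC.card_eq_of_cospectral hcosF
  have hcardW := TEC.card_eq_of_cospectral hcosH
  have hregF₂' : F₂.IsRegularOfDegree c₁ := TEC.reg_transfer hregF₁ hregF₂ hcosF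
  have hregH₂' : H₂.IsRegularOfDegree d₁ := TEC.reg_transfer hregH₁ hregH₂ hcosH
  have hm : Fintype.card F₁.edgeSet = Fintype.card F₂.edgeSet :=
    TEC.edge_card_eq hregF₁ hregF₂' hcardU
  set pb : ℝ[X] := (X + C 2) * (X - C (d₁ : ℝ)) * (H₁.adjMatrix ℝ).charpoly
    * (((incMat F₁)ᵀ * incMat F₁).charpoly.comp (X + C 2))
    * (((incMat F₂)ᵀ * incMat F₂).charpoly.comp (X + C 2)) with hpbdef
  have hpb : pb ≠ 0 :=
    mul_ne_zero (mul_ne_zero (mul_ne_zero (mul_ne_zero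
      (Polynomial.monic_X_add_C (2 : ℝ)).ne_zero
      (Polynomial.monic_X_sub_C ((d₁ : ℝ))).ne_zero)
      (Matrix.charpoly_monic _).ne_zero)
      (Polynomial.comp_X_add_C_ne_zero_iff.mpr (Matrix.charpoly_monic _).ne_zero))
      (Polynomial.comp_X_add_C_ne_zero_iff.mpr (Matrix.charpoly_monic _).ne_zero)
  apply Polynomial.eq_of_infinite_eval_eq
  have hinf : {x : ℝ | pb.eval x ≠ 0}.Infinite := by
    have hfin : {x : ℝ | pb.IsRoot x}.Finite := Polynomial.finite_setOf_isRoot hpb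
    have := hfin.infinite_compl
    have hset : {x : ℝ | pb.IsRoot x}ᶜ = {x : ℝ | pb.eval x ≠ 0} := by
      ext y; simp [Polynomial.IsRoot]
    rwa [hset] at this
  refine Set.Infinite.mono ?_ hinf
  intro x hx
  simp only [Set.mem_setOf_eq, hpbdef, Polynomial.eval_mul, Polynomial.eval_comp,
    Polynomial.eval_add, Polynomial.eval_sub, Polynomial.eval_X, Polynomial.eval_C,
    mul_ne_zero_iff] at hx
  obtain ⟨⟨⟨⟨h2, hd⟩, hH1⟩, hZ1⟩, hZ2⟩ := hx
  show Polynomial.eval x ((tEdgeCorona F₁ H₁).adjMatrix ℝ).charpoly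
    = Polynomial.eval x ((tEdgeCorona F₂ H₂).adjMatrix ℝ).charpoly
  rw [TEC.eval_charpoly', TEC.eval_charpoly']
  rw [TEC.eval_charpoly'] at hH1 hZ1 hZ2
  have key₁ := TEC.key F₁ H₁ c₁ d₁ hregF₁ hregH₁ x h2 hd hH1 hZ1
  have key₂ := TEC.key F₂ H₂ c₁ d₁ hregF₂' hregH₂' x h2 hd
    (by rw [← TEC.eval_charpoly', ← hcosH, TEC.eval_charpoly']; exact hH1) hZ2
  have hQ : (Polynomial.aeval (F₁.adjMatrix ℝ) (TEC.qpoly c₁ d₁ (Fintype.card W₁) x)).det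
      = (Polynomial.aeval (F₂.adjMatrix ℝ) (TEC.qpoly c₁ d₁ (Fintype.card W₂) x)).det := by
    rw [← hcardW]
    exact TEC.det_aeval_congr hhF₁ hhF₂ hcosF _
  have hφ : (x • (1 : Matrix W₁ W₁ ℝ) - H₁.adjMatrix ℝ).det
      = (x • (1 : Matrix W₂ W₂ ℝ) - H₂.adjMatrix ℝ).det := by
    rw [← TEC.eval_charpoly', ← TEC.eval_charpoly', hcosH]
  rw [hcardU, hm, hφ, hQ] at key₁
  have hkey := key₁.trans key₂.symm
  have hs : (x + 2) ^ Fintype.card U₂ ≠ 0 := pow_ne_zero _ h2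
  have hs2 : (x - (d₁ : ℝ)) ^ Fintype.card U₂ ≠ 0 := pow_ne_zero _ hd
  exact mul_right_cancel₀ hs (mul_right_cancel₀ hs2 hkey)
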